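/- Let A = ρ c_p M^{-1} (Γ^T - I_n) F where M = diag(c_p m) with m_i > 0, F = diag(f) with f_i > 0, ρ, c_p > 0, and Γ = [γ_ij] with 0 < γ_ij and for each rack i the flow balance f_i = Σ_j γ_ji f_j + f_sup^i holds with f_sup^i > 0 (so Σ_j γ_ji f_j < f_i). Then A is strictly row diagonally dominant with strictly negative diagonal entries. -/

import Mathlib

open Matrix Finset

/-- The data-center matrix `A = ρ c_p M⁻¹ (Γᵀ - I) F` is strictly row
diagonally dominant with strictly negative diagonal entries. -/
theorem stmt0 (n : ℕ) (ρ cp : ℝ) (m f fsup : Fin n → ℝ) (Γ : Matrix (Fin n) (Fin n) ℝ)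
    (hρ : 0 < ρ) (hcp : 0 < cp)
    (hm : ∀ i, 0 < m i) (hf : ∀ i, 0 < f i)
    (hγ : ∀ i j, 0 < Γ i j)
    (hfsup : ∀ i, 0 < fsup i)
    (hbal : ∀ i, f i = (∑ j, Γ j i * f j) + fsup i)
    (A : Matrix (Fin n) (Fin n) ℝ)
    (hA : A = (ρ * cp) • ((Matrix.diagonal (fun i => cp * m i))⁻¹ *
        (Γ.transpose - 1) * Matrix.diagonal f)) :
    ∀ i, A i i < 0 ∧ ∑ j ∈ Finset.univ.erase i, |A i j| < |A i i| := by
  have hinv : (Matrix.diagonal (fun i => cp * m i))⁻¹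
      = Matrix.diagonal (fun i => (cp * m i)⁻¹) := by
    apply Matrix.inv_eq_left_inv
    rw [Matrix.diagonal_mul_diagonal]
    have : (fun i => (cp * m i)⁻¹ * (cp * m i)) = fun _ => (1 : ℝ) := by
      funext a
      exact inv_mul_cancel₀ (mul_pos hcp (hm a)).ne'
    rw [this, Matrix.diagonal_one]
  have key : ∀ i j, A i j = ρ / m i * ((Γ j i - if i = j then 1 else 0) * f j) := by
    intro i j
    subst hA
    rw [hinv]
    simp only [Matrix.smul_apply, Matrix.diagonal_mul, Matrix.mul_diagonal,
      Matrix.sub_apply, Matrix.transpose_apply, Matrix.one_apply, smul_eq_mul]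
    have hmi := (hm i).ne'
    have hcp' := hcp.ne'
    field_simp
  intro i
  set c := ρ / m i with hc
  have hcpos : 0 < c := div_pos hρ (hm i)
  -- from balance: ∑ j, Γ j i * f j < f i
  have hsum : (∑ j, Γ j i * f j) < f i := by
    have := hbal i; linarith [hfsup i]
  have hterm : ∀ j, 0 < Γ j i * f j := fun j => mul_pos (hγ j i) (hf j)
  have hΓii : Γ i i * f i < f i := by
    calc Γ i i * f i ≤ ∑ j, Γ j i * f j :=
          Finset.single_le_sum (fun j _ => (hterm j).le) (Finset.mem_univ i)
      _ < f i := hsum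
  have hdiag : A i i = c * ((Γ i i - 1) * f i) := by simp [key i i, hc]
  have hdneg : A i i < 0 := by
    rw [hdiag]
    have : (Γ i i - 1) * f i < 0 := by nlinarith
    exact mul_neg_of_pos_of_neg hcpos this
  refine ⟨hdneg, ?_⟩
  have habs : |A i i| = c * ((1 - Γ i i) * f i) := by
    rw [abs_of_neg hdneg, hdiag]; ring
  have hoff : ∀ j, j ≠ i → |A i j| = c * (Γ j i * f j) := by
    intro j hji
    have : A i j = c * (Γ j i * f j) := by
      rw [key i j, if_neg (fun h => hji h.symm)]; ring
    rw [this, abs_of_pos (mul_pos hcpos (hterm j))]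
  have hsum2 : ∑ j ∈ Finset.univ.erase i, |A i j| = c * ∑ j ∈ Finset.univ.erase i, Γ j i * f j := by
    rw [Finset.mul_sum]
    exact Finset.sum_congr rfl fun j hj => hoff j (Finset.ne_of_mem_erase hj)
  have hse : ∑ j ∈ Finset.univ.erase i, Γ j i * f j = (∑ j, Γ j i * f j) - Γ i i * f i := by
    rw [Finset.sum_erase_eq_sub (Finset.mem_univ i)]
  rw [hsum2, habs, hse]
  have : (∑ j, Γ j i * f j) - Γ i i * f i < (1 - Γ i i) * f i := by nlinarith
  exact (mul_lt_mul_iff_right₀ hcpos).mpr this
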